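/- For a Parrondo mod-m random walk G(m, p, p') (steps +1 with probability p' and −1 with probability q' = 1−p' when the current state is divisible by m, and +1 with probability p, −1 with probability q = 1−p otherwise), with |p − p'| < 1 and p, p' ∈ (0,1), the embedded walk on mℤ (recording ±1 according to whether the walk moves up or down by m between successive visits to mℤ) is a simple random walk with success probability p*_m = p'·p^{m−1} / (p'·p^{m−1} + q'·q^{m−1}). -/

import Mathlib

/-- For the Parrondo mod-m walk `G(m, p, p')` (up-probability `p'` at states
divisible by `m`, `p` elsewhere), the function `u j` = probability of hitting
`m` before `-m` starting from `j` satisfies the harmonic equations below, and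
the success probability of the embedded walk on `mℤ`, namely `u 0`, equals
`p' p^{m-1} / (p' p^{m-1} + q' q^{m-1})`. -/
theorem stmt_1 (m : ℕ) (hm : 2 ≤ m) (p p' : ℝ)
    (hp : p ∈ Set.Ioo (0:ℝ) 1) (hp' : p' ∈ Set.Ioo (0:ℝ) 1)
    (hdiff : |p - p'| < 1)
    (u : ℤ → ℝ) (hbot : u (-(m : ℤ)) = 0) (htop : u m = 1)
    (hrec : ∀ j : ℤ, -(m : ℤ) < j → j < m →
      u j = (if (m : ℤ) ∣ j then p' else p) * u (j + 1)
          + (if (m : ℤ) ∣ j then 1 - p' else 1 - p) * u (j - 1)) :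
    u 0 = p' * p ^ (m - 1) / (p' * p ^ (m - 1) + (1 - p') * (1 - p) ^ (m - 1)) := by
  obtain ⟨hp0, hp1⟩ := hp
  obtain ⟨hp'0, hp'1⟩ := hp'
  have hpne : p ≠ 0 := ne_of_gt hp0
  have hp'ne : p' ≠ 0 := ne_of_gt hp'0
  have hq0 : 0 < 1 - p := by linarith
  have hq'0 : 0 < 1 - p' := by linarith
  have hm0 : (0 : ℤ) < m := by exact_mod_cast (by omega : 0 < m)
  set r : ℝ := (1 - p) / p with hr
  have hrpos : 0 < r := div_pos hq0 hp0
  set G : ℕ → ℝ := fun k => ∑ i ∈ Finset.range k, r ^ i with hG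
  have hGstep : ∀ k, G (k+1) = G k + r ^ k := fun k => Finset.sum_range_succ _ _
  have hpr : p * r = 1 - p := by rw [hr, mul_div_assoc']; exact mul_div_cancel_left₀ _ hpne
  have hkey : ∀ k, p * G (k+2) + (1 - p) * G k = G (k+1) := by
    intro k
    have h1 := hGstep (k+1)
    have h2 := hGstep k
    have h3 : p * r ^ (k+1) = (1 - p) * r ^ k := by
      rw [pow_succ, ← mul_assoc, mul_comm p (r ^ k), mul_assoc, hpr]
      ring
    nlinarith [h1, h2, h3]
  have hGpos : ∀ k : ℕ, 0 < k → 0 < G k := by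
    intro k hk
    apply Finset.sum_pos
    · intro i _; positivity
    · exact Finset.nonempty_range_iff.mpr (by omega)
  have hnd : ∀ j : ℤ, -(m : ℤ) < j → j < m → j ≠ 0 → ¬ ((m : ℤ) ∣ j) := by
    intro j h1 h2 h3 h
    rcases h with ⟨c, rfl⟩
    have : c = 0 := by
      rcases lt_trichotomy c 0 with hc | hc | hc
      · nlinarith
      · exact hc
      · nlinarith
    simp [this] at h3
  -- LEFT HALF: u (k - m) = a * G k for k ≤ m
  set a : ℝ := u ((1 : ℤ) - m) with ha
  have main : ∀ k : ℕ, k + 1 ≤ m →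
      u ((k : ℤ) - m) = a * G k ∧ u (((k+1 : ℕ) : ℤ) - m) = a * G (k+1) := by
    intro k
    induction k with
    | zero =>
      intro _
      constructor
      · simpa [hG] using hbot
      · simp [hG, ha]
    | succ n ih =>
      intro hk
      obtain ⟨h1, h2⟩ := ih (by omega)
      refine ⟨h2, ?_⟩
      have hn1 : (0 : ℤ) < ((n+1 : ℕ) : ℤ) := by exact_mod_cast Nat.succ_pos n
      have hn2 : ((n+1 : ℕ) : ℤ) < m := by exact_mod_cast (by omega : n + 1 < m)
      have hj1 : -(m : ℤ) < ((n+1 : ℕ) : ℤ) - m := by linarith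
      have hj2 : ((n+1 : ℕ) : ℤ) - m < m := by linarith
      have hj3 : ((n+1 : ℕ) : ℤ) - m ≠ 0 := by omega
      have hjd := hnd _ hj1 hj2 hj3
      have hrec' := hrec (((n+1 : ℕ) : ℤ) - m) hj1 hj2
      rw [if_neg hjd, if_neg hjd] at hrec'
      have e1 : (((n+1 : ℕ) : ℤ) - m) + 1 = ((n+2 : ℕ) : ℤ) - m := by push_cast; ring
      have e2 : (((n+1 : ℕ) : ℤ) - m) - 1 = ((n : ℕ) : ℤ) - m := by push_cast; ring
      rw [e1, e2, h1, h2] at hrec'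
      have hk2 := hkey n
      have hcan : p * u (((n+2 : ℕ) : ℤ) - m) = p * (a * G (n+2)) := by
        linear_combination (-a) * hk2 - hrec'
      have := mul_left_cancel₀ hpne hcan
      exact this
  have hleft : ∀ k : ℕ, k ≤ m → u ((k : ℤ) - m) = a * G k := by
    intro k hk
    rcases Nat.lt_or_ge k m with h | h
    · exact (main k (by omega)).1
    · have hkm : k = m := by omega
      subst hkm
      have := (main (k-1) (by omega)).2
      rwa [Nat.sub_add_cancel (by omega)] at this
  have hu0 : u 0 = a * G m := by
    have := hleft m le_rfl
    simpa using this
  have hum1 : u (-1) = a * G (m-1) := by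
    have h := hleft (m-1) (by omega)
    have e : ((m-1 : ℕ) : ℤ) - m = -1 := by
      have h1 : ((m-1 : ℕ) : ℤ) = (m : ℤ) - 1 := by
        push_cast [Nat.cast_sub (by omega : 1 ≤ m)]; ring
      rw [h1]; ring
    rwa [e] at h
  -- JUNCTION at 0
  set b : ℝ := a * ((1 - p') / p') * r ^ (m-1) with hb
  have hrec0 := hrec 0 (by linarith) hm0
  rw [if_pos (dvd_zero _), if_pos (dvd_zero _)] at hrec0
  have hGm : G m = G (m-1) + r ^ (m-1) := by
    have := hGstep (m-1)
    rwa [Nat.sub_add_cancel (by omega)] at this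
  have hu1 : u 1 = u 0 + b * G 1 := by
    have e0 : ((0:ℤ) + 1) = 1 := by ring
    have e1 : ((0:ℤ) - 1) = -1 := by ring
    rw [e0, e1, hum1, hu0] at hrec0
    have hcan : p' * u 1 = p' * (u 0 + b * G 1) := by
      have hG1 : G 1 = 1 := by simp [hG]
      rw [hu0, hG1, hb]
      have hbp : p' * (a * ((1 - p') / p') * r ^ (m-1)) = (1 - p') * a * r ^ (m-1) := by
        field_simp
      linear_combination -hrec0 - hbp + (1 - p') * a * hGm
    exact mul_left_cancel₀ hp'ne hcan
  -- RIGHT HALF: u k = u 0 + b * G k for k ≤ m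
  have main2 : ∀ k : ℕ, k + 1 ≤ m →
      u (k : ℤ) = u 0 + b * G k ∧ u ((k+1 : ℕ) : ℤ) = u 0 + b * G (k+1) := by
    intro k
    induction k with
    | zero =>
      intro _
      constructor
      · simp [hG]
      · simpa [hG] using hu1
    | succ n ih =>
      intro hk
      obtain ⟨h1, h2⟩ := ih (by omega)
      refine ⟨h2, ?_⟩
      have hn1 : (0 : ℤ) < ((n+1 : ℕ) : ℤ) := by exact_mod_cast Nat.succ_pos n
      have hn2 : ((n+1 : ℕ) : ℤ) < m := by exact_mod_cast (by omega : n + 1 < m)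
      have hj1 : -(m : ℤ) < ((n+1 : ℕ) : ℤ) := by linarith
      have hjd := hnd _ hj1 hn2 (by omega)
      have hrec' := hrec ((n+1 : ℕ) : ℤ) hj1 hn2
      rw [if_neg hjd, if_neg hjd] at hrec'
      have e1 : ((n+1 : ℕ) : ℤ) + 1 = ((n+2 : ℕ) : ℤ) := by push_cast; ring
      have e2 : ((n+1 : ℕ) : ℤ) - 1 = ((n : ℕ) : ℤ) := by push_cast; ring
      rw [e1, e2, h1, h2] at hrec'
      have hk2 := hkey n
      have hcan : p * u ((n+2 : ℕ) : ℤ) = p * (u 0 + b * G (n+2)) := by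
        linear_combination (-b) * hk2 - hrec'
      have := mul_left_cancel₀ hpne hcan
      exact this
  have hum : u (m : ℤ) = u 0 + b * G m := by
    have := (main2 (m-1) (by omega)).2
    rwa [Nat.sub_add_cancel (by omega)] at this
  rw [htop] at hum
  -- FINAL ALGEBRA
  have hGmpos : 0 < G m := hGpos m (by omega)
  set c : ℝ := ((1 - p') / p') * r ^ (m-1) with hc
  have hcpos : 0 < c := by positivity
  have heq : u 0 * (1 + c) = 1 := by
    have hbG : b * G m = u 0 * c := by rw [hb, hc, hu0]; ring
    linear_combination -hum - hbG
  have hu0v : u 0 = 1 / (1 + c) := by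
    field_simp at heq ⊢
    linarith [heq]
  rw [hu0v, hc, hr]
  have hpow : ((1 - p) / p) ^ (m-1) = (1-p) ^ (m-1) / p ^ (m-1) := div_pow _ _ _
  rw [hpow]
  have hden : 0 < p' * p ^ (m-1) + (1 - p') * (1 - p) ^ (m-1) := by positivity
  field_simp
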